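/- Let T ≥ 3, λ > 0, G > 0, c ≥ 0, let each f_t : ℝ^d → ℝ be λ-strongly convex and differentiable with ‖∇f_t(w)‖ ≤ G for all w ∈ 𝒟, let w_1 ∈ 𝒟, and define iterates by w_{t+1} = Π(w_t − η_t·∇f_t(w_t)) with step sizes η_t = 1/(λ(t + c)). Then the regret satisfies R = Σ_{t=1}^T f_t(w_t) − min_{w ∈ 𝒟} Σ_{t=1}^T f_t(w) ≤ λ·(c + 1)·D² + (2G²/λ)·log(T/(1 + c) + 1). -/

import Mathlib

open scoped InnerProductSpace BigOperators

/-- Euclidean projection onto the ball `{w : ‖w‖ ≤ D/2}` in `ℝ^d`. -/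
noncomputable def ballProj (d : ℕ) (D : ℝ) (p : EuclideanSpace ℝ (Fin d)) :
    EuclideanSpace ℝ (Fin d) :=
  if ‖p‖ ≤ D / 2 then p else (D / (2 * ‖p‖)) • p

lemma ballProj_norm_le (d : ℕ) (D : ℝ) (hD : 0 ≤ D) (p : EuclideanSpace ℝ (Fin d)) :
    ‖ballProj d D p‖ ≤ D / 2 := by
  unfold ballProj
  split_ifs with h
  · exact h
  · push_neg at h
    have hp : 0 < ‖p‖ := lt_of_le_of_lt (by positivity) h
    rw [norm_smul, Real.norm_eq_abs, abs_of_nonneg (by positivity)]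
    have hp' : ‖p‖ ≠ 0 := ne_of_gt hp
    exact le_of_eq (by field_simp)

lemma ballProj_nonexpansive (d : ℕ) (D : ℝ) (p q : EuclideanSpace ℝ (Fin d))
    (hq : ‖q‖ ≤ D / 2) : ‖ballProj d D p - q‖ ≤ ‖p - q‖ := by
  unfold ballProj
  split_ifs with h
  · exact le_rfl
  · push_neg at h
    have hq0 : (0:ℝ) ≤ ‖q‖ := norm_nonneg q
    have hp : 0 < ‖p‖ := lt_of_le_of_lt (le_trans hq0 hq) h
    set s : ℝ := D / (2 * ‖p‖) with hs
    have hs0 : 0 ≤ s := div_nonneg (by linarith) (by positivity)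
    have hs1 : s ≤ 1 := by
      rw [hs, div_le_one (by positivity)]; linarith
    have hsp : s * ‖p‖ = D / 2 := by
      rw [hs, div_mul_eq_mul_div, mul_comm 2 ‖p‖, ← div_div, mul_div_cancel_right₀ _ hp.ne']
    have hiq : ⟪p, q⟫_ℝ ≤ ‖p‖ * ‖q‖ := real_inner_le_norm p q
    have e1 : ‖s • p - q‖^2 = s^2 * ‖p‖^2 - 2 * (s * ⟪p, q⟫_ℝ) + ‖q‖^2 := by
      rw [norm_sub_sq_real, norm_smul, real_inner_smul_left, Real.norm_eq_abs,
        abs_of_nonneg hs0, mul_pow]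
    have e2 : ‖p - q‖^2 = ‖p‖^2 - 2 * ⟪p, q⟫_ℝ + ‖q‖^2 := norm_sub_sq_real p q
    have hsq : ‖s • p - q‖^2 ≤ ‖p - q‖^2 := by nlinarith [norm_nonneg (s • p - q)]
    nlinarith [norm_nonneg (s • p - q), norm_nonneg (p - q)]

set_option maxHeartbeats 1600000 in
/-- For `λ`-strongly convex differentiable losses with gradients bounded by `G`
on the ball `𝒟`, the iterates `w (t+1) = Π(w t − η_t • ∇f_t(w t))` with `η_t = 1/(λ(t + c))`
achieve regret at most `λ·(c + 1)·D² + (2G²/λ)·log (T/(1 + c) + 1)`. -/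
theorem stmt15 (d T : ℕ) (hT : 3 ≤ T) (D G lam c : ℝ) (hD : 0 < D) (hlam : 0 < lam)
    (hG : 0 < G) (hc : 0 ≤ c)
    (f : ℕ → EuclideanSpace ℝ (Fin d) → ℝ)
    (hdiff : ∀ t ∈ Finset.Icc 1 T, Differentiable ℝ (f t))
    (hsc : ∀ t ∈ Finset.Icc 1 T,
      ∀ u ∈ Metric.closedBall (0 : EuclideanSpace ℝ (Fin d)) (D / 2),
      ∀ v ∈ Metric.closedBall (0 : EuclideanSpace ℝ (Fin d)) (D / 2),
        f t v + ⟪gradient (f t) v, u - v⟫_ℝ + lam / 2 * ‖u - v‖ ^ 2 ≤ f t u)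
    (hgrad : ∀ t ∈ Finset.Icc 1 T,
      ∀ v ∈ Metric.closedBall (0 : EuclideanSpace ℝ (Fin d)) (D / 2), ‖gradient (f t) v‖ ≤ G)
    (w : ℕ → EuclideanSpace ℝ (Fin d))
    (hw1 : w 1 ∈ Metric.closedBall (0 : EuclideanSpace ℝ (Fin d)) (D / 2))
    (hupd : ∀ t ∈ Finset.Icc 1 (T - 1),
      w (t + 1) = ballProj d D (w t - (1 / (lam * ((t : ℝ) + c))) • gradient (f t) (w t))) :
    (∑ t ∈ Finset.Icc 1 T, f t (w t)) -
        (⨅ v : Metric.closedBall (0 : EuclideanSpace ℝ (Fin d)) (D / 2),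
          ∑ t ∈ Finset.Icc 1 T, f t (v : EuclideanSpace ℝ (Fin d))) ≤
      lam * (c + 1) * D ^ 2 + (2 * G ^ 2 / lam) * Real.log ((T : ℝ) / (1 + c) + 1) := by
  have hc1 : (0:ℝ) < 1 + c := by linarith
  -- all iterates stay in the ball
  have hball : ∀ t, 1 ≤ t → t ≤ T → ‖w t‖ ≤ D / 2 := by
    intro t ht1
    induction t, ht1 using Nat.le_induction with
    | base => intro _; simpa [Metric.mem_closedBall, dist_zero_right] using hw1
    | succ n hn ih =>
      intro hnT
      have hn' : n ≤ T - 1 := by omega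
      rw [hupd n (Finset.mem_Icc.mpr ⟨hn, hn'⟩)]
      exact ballProj_norm_le d D hD.le _
  -- extended iterate sequence
  set gr : ℕ → EuclideanSpace ℝ (Fin d) := fun t => gradient (f t) (w t) with hgr
  set W : ℕ → EuclideanSpace ℝ (Fin d) := fun t => if t ≤ T then w t
    else ballProj d D (w T - (1 / (lam * ((T : ℝ) + c))) • gr T) with hW
  have hWt : ∀ t, t ≤ T → W t = w t := by intro t ht; simp [hW, ht]
  have hupd' : ∀ t, 1 ≤ t → t ≤ T →
      W (t + 1) = ballProj d D (W t - (1 / (lam * ((t : ℝ) + c))) • gradient (f t) (W t)) := by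
    intro t ht1 htT
    rcases lt_or_eq_of_le htT with hlt | rfl
    · rw [hWt t htT, hWt (t+1) (by omega)]
      exact hupd t (Finset.mem_Icc.mpr ⟨ht1, by omega⟩)
    · rw [hWt t le_rfl]
      simp only [hW, hgr]
      rw [if_neg (by omega)]
  have hWball : ∀ t, 1 ≤ t → t ≤ T → ‖W t‖ ≤ D / 2 := by
    intro t h1 h2; rw [hWt t h2]; exact hball t h1 h2
  -- the log-sum bound
  have hlogpt : ∀ t : ℕ, 1 ≤ t →
      1 / ((t:ℝ) + c) ≤ 2 * (Real.log ((t:ℝ) + 1 + c) - Real.log ((t:ℝ) + c)) := by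
    intro t ht
    have hx : (1:ℝ) ≤ (t:ℝ) + c := by
      have : (1:ℝ) ≤ (t:ℝ) := by exact_mod_cast ht
      linarith
    have hx0 : (0:ℝ) < (t:ℝ) + c := by linarith
    have hx1 : (0:ℝ) < (t:ℝ) + 1 + c := by linarith
    have key : Real.log (((t:ℝ) + c) / ((t:ℝ) + 1 + c)) ≤ ((t:ℝ) + c) / ((t:ℝ) + 1 + c) - 1 :=
      Real.log_le_sub_one_of_pos (by positivity)
    rw [Real.log_div (ne_of_gt hx0) (ne_of_gt hx1)] at key
    have h2 : ((t:ℝ) + c) / ((t:ℝ) + 1 + c) - 1 = -(1 / ((t:ℝ) + 1 + c)) := by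
      field_simp; ring
    rw [h2] at key
    have h3 : 1 / ((t:ℝ) + c) ≤ 2 * (1 / ((t:ℝ) + 1 + c)) := by
      rw [mul_one_div, div_le_div_iff₀ hx0 hx1]
      linarith
    linarith
  -- key per-comparator regret bound
  have key : ∀ u : EuclideanSpace ℝ (Fin d), ‖u‖ ≤ D / 2 →
      (∑ t ∈ Finset.Icc 1 T, f t (w t)) - (∑ t ∈ Finset.Icc 1 T, f t u) ≤
      lam * (c + 1) * D ^ 2 + (2 * G ^ 2 / lam) * Real.log ((T : ℝ) / (1 + c) + 1) := by
    intro u hu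
    have humem : u ∈ Metric.closedBall (0 : EuclideanSpace ℝ (Fin d)) (D / 2) := by
      simpa [Metric.mem_closedBall, dist_zero_right] using hu
    set φ : ℕ → ℝ := fun t => lam * ((t : ℝ) + c - 1) / 2 * ‖W t - u‖ ^ 2 with hφ
    have step : ∀ t ∈ Finset.Icc 1 T, f t (w t) - f t u ≤
        (φ t - φ (t + 1)) + (G ^ 2 / (2 * lam)) * (1 / ((t : ℝ) + c)) := by
      intro t htm
      obtain ⟨ht1, htT⟩ := Finset.mem_Icc.mp htm
      have htc : (1 : ℝ) ≤ (t : ℝ) + c := by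
        have : (1 : ℝ) ≤ (t : ℝ) := by exact_mod_cast ht1
        linarith
      have hwmem : w t ∈ Metric.closedBall (0 : EuclideanSpace ℝ (Fin d)) (D / 2) := by
        simpa [Metric.mem_closedBall, dist_zero_right] using hball t ht1 htT
      set g : EuclideanSpace ℝ (Fin d) := gradient (f t) (w t) with hg
      have hgn : ‖g‖ ≤ G := hgrad t htm (w t) hwmem
      have hg2 : ‖g‖ ^ 2 ≤ G ^ 2 := by nlinarith [norm_nonneg g]
      set K : ℝ := lam * ((t : ℝ) + c) with hK
      have hK0 : (0 : ℝ) < K := mul_pos hlam (by linarith)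
      set η : ℝ := 1 / K with hη
      have hη0 : (0 : ℝ) < η := by positivity
      have hηK : η * K = 1 := by rw [hη]; field_simp
      -- projection step
      have hproj : W (t + 1) = ballProj d D (w t - η • g) := by
        rw [hupd' t ht1 htT, hWt t htT]
      have hne : ‖W (t + 1) - u‖ ≤ ‖w t - η • g - u‖ := by
        rw [hproj]; exact ballProj_nonexpansive d D _ u hu
      have hexp : ‖w t - η • g - u‖ ^ 2
          = ‖w t - u‖ ^ 2 - 2 * (η * ⟪w t - u, g⟫_ℝ) + η ^ 2 * ‖g‖ ^ 2 := by
        rw [sub_right_comm, norm_sub_sq_real, real_inner_smul_right, norm_smul,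
          Real.norm_eq_abs, abs_of_nonneg hη0.le, mul_pow]
      have hsq : ‖W (t + 1) - u‖ ^ 2
          ≤ ‖w t - u‖ ^ 2 - 2 * (η * ⟪w t - u, g⟫_ℝ) + η ^ 2 * ‖g‖ ^ 2 := by
        rw [← hexp]
        exact pow_le_pow_left₀ (norm_nonneg _) hne 2
      have h5 : K * ‖W (t + 1) - u‖ ^ 2
          ≤ K * ‖w t - u‖ ^ 2 - 2 * ⟪w t - u, g⟫_ℝ + η * ‖g‖ ^ 2 := by
        have h4 := mul_le_mul_of_nonneg_left hsq hK0.le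
        have e : K * (‖w t - u‖ ^ 2 - 2 * (η * ⟪w t - u, g⟫_ℝ) + η ^ 2 * ‖g‖ ^ 2)
            = K * ‖w t - u‖ ^ 2 - 2 * ⟪w t - u, g⟫_ℝ + η * ‖g‖ ^ 2 := by
          rw [hη]; field_simp
        linarith [h4, e.le, e.ge]
      -- strong convexity
      have hscv := hsc t htm u humem (w t) hwmem
      have hinner : ⟪g, u - w t⟫_ℝ = -⟪w t - u, g⟫_ℝ := by
        rw [real_inner_comm, show u - w t = -(w t - u) by abel, inner_neg_left]
      rw [hinner] at hscv
      have hnrev : ‖u - w t‖ = ‖w t - u‖ := norm_sub_rev u (w t)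
      rw [hnrev] at hscv
      -- gradient term bound
      have hgb : η * ‖g‖ ^ 2 ≤ η * G ^ 2 := mul_le_mul_of_nonneg_left hg2 hη0.le
      have hGeq : (G ^ 2 / (2 * lam)) * (1 / ((t : ℝ) + c)) = η * G ^ 2 / 2 := by
        rw [hη, hK]; field_simp
      -- unfold φ
      have hφt : φ t = (K - lam) / 2 * ‖w t - u‖ ^ 2 := by
        rw [hφ]; simp only [hK]; rw [hWt t htT]; ring
      have hφt1 : φ (t + 1) = K / 2 * ‖W (t + 1) - u‖ ^ 2 := by
        rw [hφ]; simp only [hK]; push_cast; ring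
      rw [hφt, hφt1, hGeq]
      nlinarith [h5, hscv, hgb]
    -- sum up
    have hsum1 : ∑ t ∈ Finset.Icc 1 T, (f t (w t) - f t u)
        ≤ ∑ t ∈ Finset.Icc 1 T, ((φ t - φ (t + 1)) + (G ^ 2 / (2 * lam)) * (1 / ((t : ℝ) + c))) :=
      Finset.sum_le_sum step
    rw [Finset.sum_add_distrib, ← Finset.mul_sum] at hsum1
    have htel : ∑ t ∈ Finset.Icc 1 T, (φ t - φ (t + 1)) = φ 1 - φ (T + 1) := by
      rw [← Finset.Ico_add_one_right_eq_Icc, Finset.sum_Ico_eq_sum_range]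
      have hTT : T + 1 - 1 = T := by omega
      rw [hTT]
      calc ∑ i ∈ Finset.range T, (φ (1 + i) - φ (1 + i + 1))
          = ∑ i ∈ Finset.range T, (φ (1 + i) - φ (1 + (i + 1))) := by
            apply Finset.sum_congr rfl; intro i _; rw [Nat.add_assoc]
        _ = φ (1 + 0) - φ (1 + T) := Finset.sum_range_sub' (fun i => φ (1 + i)) T
        _ = φ 1 - φ (T + 1) := by rw [Nat.add_comm 1 T, Nat.add_zero]
    set L : ℕ → ℝ := fun n => Real.log ((n : ℝ) + c) with hL
    have hlogsum : ∑ t ∈ Finset.Icc 1 T, (1 / ((t : ℝ) + c))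
        ≤ 2 * (Real.log ((T : ℝ) + 1 + c) - Real.log (1 + c)) := by
      calc ∑ t ∈ Finset.Icc 1 T, (1 / ((t : ℝ) + c))
          ≤ ∑ t ∈ Finset.Icc 1 T, 2 * (L (t + 1) - L t) := by
            apply Finset.sum_le_sum
            intro t htm
            have h := hlogpt t (Finset.mem_Icc.mp htm).1
            have e1 : L (t + 1) = Real.log ((t : ℝ) + 1 + c) := by rw [hL]; push_cast; ring_nf
            have e2 : L t = Real.log ((t : ℝ) + c) := rfl
            rw [e1, e2]; exact h
        _ = 2 * ∑ t ∈ Finset.Icc 1 T, (L (t + 1) - L t) := by rw [Finset.mul_sum]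
        _ = 2 * (L (T + 1) - L 1) := by
            congr 1
            rw [← Finset.Ico_add_one_right_eq_Icc, Finset.sum_Ico_eq_sum_range]
            have hTT : T + 1 - 1 = T := by omega
            rw [hTT]
            have := Finset.sum_range_sub (fun i => L (1 + i)) T
            calc ∑ i ∈ Finset.range T, (L (1 + i + 1) - L (1 + i))
                = ∑ i ∈ Finset.range T, (L (1 + (i + 1)) - L (1 + i)) := by
                  apply Finset.sum_congr rfl; intro i _; rw [Nat.add_assoc]
              _ = L (1 + T) - L (1 + 0) := Finset.sum_range_sub (fun i => L (1 + i)) T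
              _ = L (T + 1) - L 1 := by rw [Nat.add_comm 1 T, Nat.add_zero]
        _ = 2 * (Real.log ((T : ℝ) + 1 + c) - Real.log (1 + c)) := by
            rw [hL]; push_cast; ring_nf
    -- bound the endpoints
    have hw1n : ‖w 1‖ ≤ D / 2 := by
      simpa [Metric.mem_closedBall, dist_zero_right] using hw1
    have hφ1 : φ 1 ≤ lam * c / 2 * D ^ 2 := by
      have hW1 : W 1 = w 1 := hWt 1 (by omega)
      have hd : ‖w 1 - u‖ ≤ D := le_trans (norm_sub_le _ _) (by linarith)
      have hd0 : (0 : ℝ) ≤ ‖w 1 - u‖ := norm_nonneg _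
      rw [hφ]; simp only [hW1]
      push_cast
      have h1 : ‖w 1 - u‖ ^ 2 ≤ D ^ 2 := by nlinarith
      have h2 : (0 : ℝ) ≤ lam * c / 2 := by positivity
      calc lam * ((1 : ℝ) + c - 1) / 2 * ‖w 1 - u‖ ^ 2
          = lam * c / 2 * ‖w 1 - u‖ ^ 2 := by ring_nf
        _ ≤ lam * c / 2 * D ^ 2 := by nlinarith
    have hφT : (0 : ℝ) ≤ φ (T + 1) := by
      rw [hφ]
      have : (0 : ℝ) ≤ ((T + 1 : ℕ) : ℝ) + c - 1 := by push_cast; linarith [Nat.cast_nonneg (α := ℝ) T]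
      positivity
    -- log identity
    have hTc : (0 : ℝ) < (T : ℝ) + 1 + c := by positivity
    have hlogeq : Real.log ((T : ℝ) / (1 + c) + 1)
        = Real.log ((T : ℝ) + 1 + c) - Real.log (1 + c) := by
      rw [show (T : ℝ) / (1 + c) + 1 = ((T : ℝ) + 1 + c) / (1 + c) by field_simp; ring,
        Real.log_div (ne_of_gt hTc) (ne_of_gt hc1)]
    have hlognn : (0 : ℝ) ≤ Real.log ((T : ℝ) + 1 + c) - Real.log (1 + c) := by
      rw [← hlogeq]
      apply Real.log_nonneg
      have : (0 : ℝ) ≤ (T : ℝ) / (1 + c) := by positivity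
      linarith
    have hsums : ∑ t ∈ Finset.Icc 1 T, (f t (w t) - f t u)
        = (∑ t ∈ Finset.Icc 1 T, f t (w t)) - (∑ t ∈ Finset.Icc 1 T, f t u) :=
      Finset.sum_sub_distrib (fun t => f t (w t)) (fun t => f t u)
    rw [hsums, htel] at hsum1
    have hcoef : (0 : ℝ) ≤ G ^ 2 / (2 * lam) := by positivity
    have hmul : G ^ 2 / (2 * lam) * (∑ t ∈ Finset.Icc 1 T, (1 / ((t : ℝ) + c)))
        ≤ G ^ 2 / (2 * lam) * (2 * (Real.log ((T : ℝ) + 1 + c) - Real.log (1 + c))) :=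
      mul_le_mul_of_nonneg_left hlogsum hcoef
    have hfin : lam * c / 2 * D ^ 2 + G ^ 2 / (2 * lam) * (2 * (Real.log ((T : ℝ) + 1 + c) - Real.log (1 + c)))
        ≤ lam * (c + 1) * D ^ 2 + (2 * G ^ 2 / lam) * Real.log ((T : ℝ) / (1 + c) + 1) := by
      rw [hlogeq]
      have h1 : lam * c / 2 * D ^ 2 ≤ lam * (c + 1) * D ^ 2 := by
        nlinarith [mul_nonneg (mul_nonneg hlam.le hc) (sq_nonneg D), mul_nonneg hlam.le (sq_nonneg D)]
      have h2 : G ^ 2 / (2 * lam) * (2 * (Real.log ((T : ℝ) + 1 + c) - Real.log (1 + c)))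
          ≤ 2 * G ^ 2 / lam * (Real.log ((T : ℝ) + 1 + c) - Real.log (1 + c)) := by
        have e : G ^ 2 / (2 * lam) * 2 ≤ 2 * G ^ 2 / lam := by
          rw [div_mul_eq_mul_div, div_le_div_iff₀ (by positivity) hlam]
          ring_nf
          nlinarith
        calc G ^ 2 / (2 * lam) * (2 * (Real.log ((T : ℝ) + 1 + c) - Real.log (1 + c)))
            = (G ^ 2 / (2 * lam) * 2) * (Real.log ((T : ℝ) + 1 + c) - Real.log (1 + c)) := by ring
          _ ≤ 2 * G ^ 2 / lam * (Real.log ((T : ℝ) + 1 + c) - Real.log (1 + c)) :=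
            mul_le_mul_of_nonneg_right e hlognn
      linarith
    linarith [hsum1, hmul, hφ1, hφT, hfin]
  -- conclude via the infimum
  haveI hne : Nonempty ↑(Metric.closedBall (0 : EuclideanSpace ℝ (Fin d)) (D / 2)) :=
    ⟨⟨0, Metric.mem_closedBall_self (by positivity)⟩⟩
  have hinf : (∑ t ∈ Finset.Icc 1 T, f t (w t)) -
      (lam * (c + 1) * D ^ 2 + (2 * G ^ 2 / lam) * Real.log ((T : ℝ) / (1 + c) + 1))
      ≤ ⨅ v : Metric.closedBall (0 : EuclideanSpace ℝ (Fin d)) (D / 2),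
          ∑ t ∈ Finset.Icc 1 T, f t (v : EuclideanSpace ℝ (Fin d)) := by
    apply le_ciInf
    intro v
    have hv : ‖(v : EuclideanSpace ℝ (Fin d))‖ ≤ D / 2 := by
      have hvm := Metric.mem_closedBall.mp v.2
      rwa [dist_zero_right] at hvm
    have h := key v hv
    linarith
  linarith [hinf]
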